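/- (The population medoid solves a constrained min k-cut.) Let θ : Fin n → Fin n → ℝ be any weight function, let C : Fin n → Fin n → ℝ be any matrix (the population centroid), and define edge weights s i j = (1/2) * θ i j * (2 * C i j − 1). Let 𝒮 be any set of binary matrices (the valid redistricting maps). Then for A₀ ∈ 𝒮: dsq_θ(A₀, C) ≤ dsq_θ(A, C) for all A ∈ 𝒮 if and only if ∑_{i,j} s i j * (1 − A₀ i j) ≤ ∑_{i,j} s i j * (1 − A i j) for all A ∈ 𝒮; i.e. A₀ minimizes dsq_θ(·, C) over 𝒮 if and only if its complement minimizes the cut objective ∑_{i,j} s i j * B i j over complements of maps in 𝒮. -/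
import Mathlib


open Finset

/-- The squared version dsq_θ of the weighted distance. -/
noncomputable def dsqTheta {n : ℕ} (θ A₁ A₂ : Fin n → Fin n → ℝ) : ℝ :=
  (1 / 2) * ∑ i : Fin n, ∑ j : Fin n, θ i j * (A₁ i j - A₂ i j) ^ 2

/-- A matrix is binary if all its entries are 0 or 1. -/
def IsBinary {n : ℕ} (A : Fin n → Fin n → ℝ) : Prop :=
  ∀ i j, A i j ∈ ({0, 1} : Set ℝ)

/-- The population medoid solves a constrained min k-cut: over any set 𝒮 of valid binary
maps, A₀ minimizes dsq_θ(·, C) iff its complement minimizes the cut objective with edge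
weights `s i j = (1/2) θ i j (2 C i j - 1)`. -/
theorem medoid_iff_min_k_cut {n : ℕ} (θ C : Fin n → Fin n → ℝ)
    (𝒮 : Set (Fin n → Fin n → ℝ)) (h𝒮 : ∀ A ∈ 𝒮, IsBinary A)
    (A₀ : Fin n → Fin n → ℝ) (hA₀ : A₀ ∈ 𝒮) :
    (∀ A ∈ 𝒮, dsqTheta θ A₀ C ≤ dsqTheta θ A C) ↔
      (∀ A ∈ 𝒮,
        ∑ i : Fin n, ∑ j : Fin n,
            ((1 / 2) * θ i j * (2 * C i j - 1)) * (1 - A₀ i j) ≤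
          ∑ i : Fin n, ∑ j : Fin n,
            ((1 / 2) * θ i j * (2 * C i j - 1)) * (1 - A i j)) := by
  have key : ∀ A ∈ 𝒮, dsqTheta θ A C =
      (∑ i : Fin n, ∑ j : Fin n, ((1 / 2) * θ i j * (2 * C i j - 1)) * (1 - A i j)) +
      ∑ i : Fin n, ∑ j : Fin n,
        ((1 / 2) * θ i j * (C i j) ^ 2 - (1 / 2) * θ i j * (2 * C i j - 1)) := by
    intro A hA
    unfold dsqTheta
    rw [Finset.mul_sum, ← Finset.sum_add_distrib]
    refine Finset.sum_congr rfl fun i _ => ?_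
    rw [Finset.mul_sum, ← Finset.sum_add_distrib]
    refine Finset.sum_congr rfl fun j _ => ?_
    have h := h𝒮 A hA i j
    simp only [Set.mem_insert_iff, Set.mem_singleton_iff] at h
    rcases h with h | h <;> rw [h] <;> ring
  constructor
  · intro H A hA
    have h1 := key A hA
    have h2 := key A₀ hA₀
    have := H A hA
    linarith
  · intro H A hA
    have h1 := key A hA
    have h2 := key A₀ hA₀
    have := H A hA
    linarith
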